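/- arXiv:2411.12553 — 3 statements merged into one kernel-verified Lean document; each statement's English description precedes it below -/
import Mathlib

section
/- For q an odd prime and 0 ≤ u ≤ (q−1)/4, we have (1/(q(2u+1)²)) ∑_{x ∈ Z/qZ} N_S(x)² = (2/3)·(2u+1)/q + 1/(3q(2u+1)), where S = {−u,...,u}. -/
open Finset

/-- `N_S(x)`: the number of ordered pairs `(a,b) ∈ S × S` with `a + b = x` in `ℤ/qℤ`. -/
def NS {q : ℕ} [NeZero q] (S : Finset (ZMod q)) (x : ZMod q) : ℕ :=
  ((S ×ˢ S).filter (fun ab => ab.1 + ab.2 = x)).card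

/-- The interval `{−u,...,u} ⊆ ℤ/qℤ`. -/
noncomputable def intervalS (q : ℕ) [NeZero q] (u : ℕ) : Finset (ZMod q) :=
  (Finset.Icc (-(u : ℤ)) (u : ℤ)).image (fun a : ℤ => (a : ZMod q))

lemma sum_sq_shift (c : ℤ) : ∀ m : ℕ, 6 * ∑ t ∈ Icc (0:ℤ) (m:ℤ), (c - t)^2
    = (m+1)*(6*c^2 - 6*c*m + m*(2*m+1)) := by
  intro m
  induction m with
  | zero => simp
  | succ m ih =>
    have h : Icc (0:ℤ) ((m+1:ℕ):ℤ) = insert ((m:ℤ)+1) (Icc (0:ℤ) (m:ℤ)) := by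
      ext x; simp only [Finset.mem_Icc, Finset.mem_insert]; omega
    rw [h, Finset.sum_insert (by simp)]
    push_cast
    push_cast at ih
    linear_combination ih

theorem stmt8 (q : ℕ) [Fact q.Prime] (hodd : Odd q) (u : ℕ) (hu : 4 * u ≤ q - 1) :
    (1 / ((q : ℝ) * (2 * u + 1) ^ 2)) * ∑ x : ZMod q, (NS (intervalS q u) x : ℝ) ^ 2 =
      (2 / 3) * (2 * u + 1) / q + 1 / (3 * q * (2 * u + 1)) := by
  have hq : q.Prime := Fact.out
  have hq1 : 4 * u + 1 ≤ q := by have := hq.two_le; omega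
  have hq1' : 4 * (u:ℤ) + 1 ≤ (q:ℤ) := by exact_mod_cast hq1
  -- injectivity of the cast on [-2u, 2u]
  have inj : ∀ a ∈ Icc (-(2*(u:ℤ))) (2*u), ∀ b ∈ Icc (-(2*(u:ℤ))) (2*u),
      ((a : ZMod q) = (b : ZMod q)) → a = b := by
    intro a ha b hb h
    simp only [Finset.mem_Icc] at ha hb
    have h0 : ((a - b : ℤ) : ZMod q) = 0 := by push_cast; rw [h]; ring
    rw [ZMod.intCast_zmod_eq_zero_iff_dvd] at h0
    have := Int.eq_zero_of_abs_lt_dvd h0 (by rw [abs_lt]; constructor <;> omega)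
    omega
  -- NS at a cast point in range
  have hNS : ∀ t ∈ Icc (-(2*(u:ℤ))) (2*u),
      (NS (intervalS q u) ((t : ℤ) : ZMod q) : ℤ) = 2*(u:ℤ)+1 - |t| := by
    intro t ht
    have ht' : -(2*(u:ℤ)) ≤ t ∧ t ≤ 2*u := by simpa [Finset.mem_Icc] using ht
    have hcard : ((Icc (-(u:ℤ)) u).filter (fun a => t - a ∈ Icc (-(u:ℤ)) u)).card
        = NS (intervalS q u) ((t : ℤ) : ZMod q) := by
      unfold NS
      apply Finset.card_bij (fun (a : ℤ) (_ : a ∈ (Icc (-(u:ℤ)) u).filter (fun a => t - a ∈ Icc (-(u:ℤ)) u)) => (((a : ZMod q), ((t - a : ℤ) : ZMod q)) : ZMod q × ZMod q))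
      · intro a ha
        simp only [Finset.mem_filter, Finset.mem_Icc] at ha
        simp only [Finset.mem_filter, Finset.mem_product]
        refine ⟨⟨?_, ?_⟩, ?_⟩
        · exact Finset.mem_image.mpr ⟨a, by simp [Finset.mem_Icc]; omega, rfl⟩
        · exact Finset.mem_image.mpr ⟨t - a, by simp [Finset.mem_Icc]; omega, rfl⟩
        · push_cast; ring
      · intro a ha b hb hab
        simp only [Finset.mem_filter, Finset.mem_Icc] at ha hb
        have := congrArg Prod.fst hab
        exact inj a (by simp [Finset.mem_Icc]; omega) b (by simp [Finset.mem_Icc]; omega) this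
      · intro p hp
        simp only [Finset.mem_filter, Finset.mem_product, intervalS, Finset.mem_image] at hp
        obtain ⟨⟨⟨a, ha, hax⟩, ⟨b, hb, hby⟩⟩, hsum⟩ := hp
        simp only [Finset.mem_Icc] at ha hb
        have hab : a + b = t := by
          apply inj (a+b) (by simp [Finset.mem_Icc]; omega) t (by simp [Finset.mem_Icc]; omega)
          push_cast; rw [hax, hby]; exact hsum
        refine ⟨a, ?_, ?_⟩
        · simp only [Finset.mem_filter, Finset.mem_Icc]
          refine ⟨⟨ha.1, ha.2⟩, ?_, ?_⟩ <;> omega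
        · have : t - a = b := by omega
          rw [this, hax, hby]
    rw [← hcard]
    have hfe : ((Icc (-(u:ℤ)) u).filter (fun a => t - a ∈ Icc (-(u:ℤ)) u))
        = Icc (max (-(u:ℤ)) (t-u)) (min (u:ℤ) (t+u)) := by
      ext a; simp only [Finset.mem_filter, Finset.mem_Icc]
      constructor
      · rintro ⟨⟨h1, h2⟩, h3, h4⟩; omega
      · intro h; omega
    rw [hfe, Int.card_Icc]
    rcases le_or_gt 0 t with h | h
    · rw [abs_of_nonneg h]; omega
    · rw [abs_of_neg h]; omega
  -- reduce the sum over ZMod q to a sum over Icc (-2u) (2u)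
  have hNS0 : ∀ x : ZMod q, x ∉ (Icc (-(2*(u:ℤ))) (2*u)).image (fun a : ℤ => (a : ZMod q)) →
      NS (intervalS q u) x = 0 := by
    intro x hx
    unfold NS
    rw [Finset.card_eq_zero, Finset.filter_eq_empty_iff]
    rintro ⟨p1, p2⟩ hp hsum
    simp only [Finset.mem_product, intervalS, Finset.mem_image] at hp
    obtain ⟨⟨a, ha, hax⟩, ⟨b, hb, hby⟩⟩ := hp
    simp only [Finset.mem_Icc] at ha hb
    apply hx
    refine Finset.mem_image.mpr ⟨a + b, by simp [Finset.mem_Icc]; omega, ?_⟩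
    push_cast
    rw [hax, hby]
    exact hsum
  have hsum : ∑ x : ZMod q, (NS (intervalS q u) x : ℤ)^2
      = ∑ t ∈ Icc (-(2*(u:ℤ))) (2*u), (NS (intervalS q u) ((t : ℤ) : ZMod q) : ℤ)^2 := by
    rw [← Finset.sum_image (f := fun x => (NS (intervalS q u) x : ℤ)^2)
        (g := fun a : ℤ => (a : ZMod q)) inj]
    apply (Finset.sum_subset (Finset.subset_univ _) ?_).symm
    intro x _ hx
    rw [hNS0 x hx]
    norm_num
  have hsum2 : ∑ x : ZMod q, (NS (intervalS q u) x : ℤ)^2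
      = ∑ t ∈ Icc (-(2*(u:ℤ))) (2*u), (2*(u:ℤ)+1 - |t|)^2 := by
    rw [hsum]
    exact Finset.sum_congr rfl (fun t ht => by rw [hNS t ht])
  -- evaluate the sum
  have key : 6 * ∑ t ∈ Icc (-(2*(u:ℤ))) (2*u), (2*(u:ℤ)+1 - |t|)^2
      = 2*(2*(u:ℤ)+1)*(2*(2*(u:ℤ)+1)^2+1) := by
    have split : Icc (-(2*(u:ℤ))) (2*u) = Icc (-(2*(u:ℤ))) (-1) ∪ Icc (0:ℤ) (2*u) := by
      ext a; simp only [Finset.mem_Icc, Finset.mem_union]; omega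
    have hdisj : Disjoint (Icc (-(2*(u:ℤ))) (-1)) (Icc (0:ℤ) (2*u)) := by
      rw [Finset.disjoint_left]
      intro a ha hb
      simp only [Finset.mem_Icc] at ha hb
      omega
    have hneg : Icc (-(2*(u:ℤ))) (-1) = (Icc (1:ℤ) (2*u)).image Neg.neg := by
      ext a
      simp only [Finset.mem_Icc, Finset.mem_image]
      constructor
      · intro h; exact ⟨-a, by omega, by omega⟩
      · rintro ⟨b, hb, rfl⟩; omega
    rw [split, Finset.sum_union hdisj, hneg,
        Finset.sum_image (by intro a _ b _ h; omega)]
    simp only [abs_neg]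
    rw [Finset.sum_congr rfl (fun t ht => by
          rw [abs_of_nonneg (by simp only [Finset.mem_Icc] at ht; omega : (0:ℤ) ≤ t)]),
        Finset.sum_congr (rfl : Icc (0:ℤ) (2*u) = _) (fun t ht => by
          rw [abs_of_nonneg (by simp only [Finset.mem_Icc] at ht; omega : (0:ℤ) ≤ t)])]
    have h0 : Icc (0:ℤ) (2*(u:ℤ)) = insert (0:ℤ) (Icc (1:ℤ) (2*(u:ℤ))) := by
      ext a; simp only [Finset.mem_Icc, Finset.mem_insert]; omega
    rw [h0, Finset.sum_insert (by simp)]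
    have hP := sum_sq_shift (2*(u:ℤ)+1) (2*u)
    rw [show ((2*u : ℕ) : ℤ) = 2*(u:ℤ) from by push_cast; ring] at hP
    rw [h0, Finset.sum_insert (by simp)] at hP
    linear_combination 2 * hP
  -- conclude over ℝ
  have hZ : (6 : ℤ) * ∑ x : ZMod q, (NS (intervalS q u) x : ℤ)^2
      = 2*(2*(u:ℤ)+1)*(2*(2*(u:ℤ)+1)^2+1) := by rw [hsum2]; exact key
  have hR : (6 : ℝ) * ∑ x : ZMod q, (NS (intervalS q u) x : ℝ)^2
      = 2*(2*(u:ℝ)+1)*(2*(2*(u:ℝ)+1)^2+1) := by exact_mod_cast hZ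
  have hq0 : (q : ℝ) ≠ 0 := Nat.cast_ne_zero.mpr hq.pos.ne'
  have hn0 : (2*(u:ℝ)+1) ≠ 0 := by positivity
  have hS : ∑ x : ZMod q, (NS (intervalS q u) x : ℝ)^2
      = (2*(2*(u:ℝ)+1)*(2*(2*(u:ℝ)+1)^2+1))/6 := by linarith
  rw [hS]
  field_simp
  ring
end

section
/- For q an odd prime, u with (q−1)/4 < u ≤ (q−1)/2, and ℓ = q − (2u+1), the collision count N_S(x) for S = {−u,...,u} ⊆ Z/qZ equals (2u+1) − |x| for x ∈ {−ℓ,...,ℓ} and equals (2u+1) − ℓ for x ∉ {−ℓ,...,ℓ}. -/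
open Finset

/-- Number of pairs in an integer box summing to `t`. -/
lemma count_Icc_pairs (u : ℕ) (t : ℤ) :
    (((Finset.Icc (-(u:ℤ)) (u:ℤ)) ×ˢ (Finset.Icc (-(u:ℤ)) (u:ℤ))).filter
        (fun p => p.1 + p.2 = t)).card = (2 * u + 1 - |t|).toNat := by
  have himg : ((Finset.Icc (-(u:ℤ)) (u:ℤ)) ×ˢ (Finset.Icc (-(u:ℤ)) (u:ℤ))).filter
        (fun p => p.1 + p.2 = t)
      = (Finset.Icc (max (-(u:ℤ)) (t - u)) (min (u:ℤ) (t + u))).image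
          (fun a => (a, t - a)) := by
    ext ⟨a, b⟩
    simp only [Finset.mem_filter, Finset.mem_product, Finset.mem_Icc, Finset.mem_image,
      Prod.mk.injEq, max_le_iff, le_min_iff]
    constructor
    · rintro ⟨⟨⟨h1, h2⟩, h3, h4⟩, h5⟩
      exact ⟨a, ⟨⟨h1, by omega⟩, h2, by omega⟩, rfl, by omega⟩
    · rintro ⟨c, ⟨⟨h1, h2⟩, h3, h4⟩, rfl, rfl⟩
      refine ⟨⟨⟨h1, h3⟩, by omega, by omega⟩, by ring⟩
  rw [himg, Finset.card_image_of_injective _ (fun a b h => (Prod.mk.injEq _ _ _ _ ▸ h).1),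
    Int.card_Icc]
  rcases le_or_gt 0 t with ht | ht
  · rw [min_eq_left (by omega), max_eq_right (by omega), abs_of_nonneg ht]
    congr 1; ring
  · rw [min_eq_right (by omega), max_eq_left (by omega), abs_of_neg ht]
    congr 1; ring

theorem stmt11 (q : ℕ) [Fact q.Prime] (hodd : Odd q) (u : ℕ)
    (hu1 : q - 1 < 4 * u) (hu2 : 2 * u ≤ q - 1) (x : ZMod q) :
    (NS (intervalS q u) x : ℤ) =
      if |x.valMinAbs| ≤ (q : ℤ) - (2 * u + 1) then
        (2 * u + 1 : ℤ) - |x.valMinAbs|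
      else (2 * u + 1 : ℤ) - ((q : ℤ) - (2 * u + 1)) := by
  have hq : q.Prime := Fact.out
  have hq3 : 3 ≤ q := by
    rcases hodd with ⟨k, hk⟩
    have := hq.two_le
    omega
  haveI : NeZero q := ⟨by omega⟩
  set v : ℤ := x.valMinAbs with hv
  have hvq : 2 * v.natAbs + 1 ≤ q := by
    have h1 : v.natAbs ≤ q / 2 := ZMod.natAbs_valMinAbs_le x
    rcases hodd with ⟨k, hk⟩
    omega
  have hvx : (v : ZMod q) = x := ZMod.coe_valMinAbs x
  set T : Finset ℤ := Finset.Icc (-(u:ℤ)) (u:ℤ) with hT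
  -- transfer the count to ℤ
  have hcard : NS (intervalS q u) x
      = ((T ×ˢ T).filter (fun p => ((p.1 + p.2 : ℤ) : ZMod q) = x)).card := by
    unfold NS
    refine (Finset.card_bij (fun p _ => (((p.1 : ℤ) : ZMod q), ((p.2 : ℤ) : ZMod q))) ?_ ?_ ?_).symm
    · rintro ⟨a, b⟩ hab
      simp only [Finset.mem_filter, Finset.mem_product] at hab ⊢
      obtain ⟨⟨ha, hb⟩, hsum⟩ := hab
      refine ⟨⟨?_, ?_⟩, ?_⟩
      · exact Finset.mem_image.2 ⟨a, ha, rfl⟩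
      · exact Finset.mem_image.2 ⟨b, hb, rfl⟩
      · push_cast at hsum ⊢; exact hsum
    · rintro ⟨a, b⟩ hab ⟨c, d⟩ hcd h
      simp only [Finset.mem_filter, Finset.mem_product, hT, Finset.mem_Icc] at hab hcd
      simp only [Prod.mk.injEq] at h ⊢
      obtain ⟨h1, h2⟩ := h
      have key : ∀ s t : ℤ, -(u:ℤ) ≤ s → s ≤ u → -(u:ℤ) ≤ t → t ≤ u →
          (s : ZMod q) = (t : ZMod q) → s = t := by
        intro s t hs1 hs2 ht1 ht2 hst
        have hdvd : (q : ℤ) ∣ t - s := (ZMod.intCast_eq_intCast_iff_dvd_sub s t q).1 hst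
        have : t - s = 0 := Int.eq_zero_of_abs_lt_dvd hdvd (by
          rw [abs_lt]; constructor <;> omega)
        omega
      exact ⟨key a c hab.1.1.1 hab.1.1.2 hcd.1.1.1 hcd.1.1.2 h1,
             key b d hab.1.2.1 hab.1.2.2 hcd.1.2.1 hcd.1.2.2 h2⟩
    · rintro ⟨s, t⟩ hst
      simp only [Finset.mem_filter, Finset.mem_product, intervalS] at hst
      obtain ⟨⟨hs, ht⟩, hsum⟩ := hst
      obtain ⟨a, ha, rfl⟩ := Finset.mem_image.1 hs
      obtain ⟨b, hb, rfl⟩ := Finset.mem_image.1 ht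
      refine ⟨⟨a, b⟩, ?_, rfl⟩
      simp only [Finset.mem_filter, Finset.mem_product]
      exact ⟨⟨ha, hb⟩, by push_cast; exact hsum⟩
  -- rewrite the congruence condition as a disjunction
  have hcond : (T ×ˢ T).filter (fun p => ((p.1 + p.2 : ℤ) : ZMod q) = x)
      = (T ×ˢ T).filter (fun p => p.1 + p.2 = v ∨ p.1 + p.2 = v - q ∨ p.1 + p.2 = v + q) := by
    apply Finset.filter_congr
    rintro ⟨a, b⟩ hab
    simp only [Finset.mem_product, hT, Finset.mem_Icc] at hab
    obtain ⟨⟨ha1, ha2⟩, hb1, hb2⟩ := hab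
    dsimp only
    constructor
    · intro h
      rw [← hvx, ZMod.intCast_eq_intCast_iff_dvd_sub] at h
      have h1 : (q:ℤ) ∣ v - (a + b) - q := dvd_sub h (dvd_refl _)
      have h2 : (q:ℤ) ∣ v - (a + b) + q := dvd_add h (dvd_refl _)
      have hb : v - (a + b) = 0 ∨ v - (a + b) - q = 0 ∨ v - (a + b) + q = 0 := by
        rcases le_or_gt 0 (v - (a + b)) with hs | hs
        · rcases lt_or_ge (v - (a + b)) (q:ℤ) with hlt | hge
          · exact Or.inl (Int.eq_zero_of_abs_lt_dvd h (by rw [abs_lt]; omega))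
          · exact Or.inr (Or.inl (Int.eq_zero_of_abs_lt_dvd h1 (by rw [abs_lt]; omega)))
        · rcases lt_or_ge (-(q:ℤ)) (v - (a + b)) with hlt | hge
          · exact Or.inl (Int.eq_zero_of_abs_lt_dvd h (by rw [abs_lt]; omega))
          · exact Or.inr (Or.inr (Int.eq_zero_of_abs_lt_dvd h2 (by rw [abs_lt]; omega)))
      omega
    · intro h
      rcases h with h | h | h <;> rw [h] <;> push_cast <;>
        simp [ZMod.natCast_self, hvx]
  rw [hcard, hcond]
  -- split the filter into three disjoint pieces
  have hdisj1 : ∀ p : ℤ × ℤ, p.1 + p.2 = v → ¬ (p.1 + p.2 = v - q ∨ p.1 + p.2 = v + q) := by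
    rintro p h (h' | h') <;> omega
  have hsplit : ((T ×ˢ T).filter
        (fun p => p.1 + p.2 = v ∨ p.1 + p.2 = v - q ∨ p.1 + p.2 = v + q)).card
      = ((T ×ˢ T).filter (fun p => p.1 + p.2 = v)).card
        + ((T ×ˢ T).filter (fun p => p.1 + p.2 = v - q)).card
        + ((T ×ˢ T).filter (fun p => p.1 + p.2 = v + q)).card := by
    rw [Finset.filter_or, Finset.filter_or, Finset.card_union_of_disjoint, Finset.card_union_of_disjoint]
    · ring
    · rw [Finset.disjoint_left]
      intro p hp hp'
      simp only [Finset.mem_filter] at hp hp'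
      obtain ⟨-, h1⟩ := hp
      obtain ⟨-, h2⟩ := hp'
      omega
    · rw [Finset.disjoint_left]
      intro p hp hp'
      simp only [Finset.mem_filter, Finset.mem_union] at hp hp'
      obtain ⟨-, h1⟩ := hp
      rcases hp' with ⟨-, h2⟩ | ⟨-, h2⟩ <;> omega
  rw [hsplit, hT, count_Icc_pairs, count_Icc_pairs, count_Icc_pairs]
  have habs : ∀ a : ℤ, |a| = (a.natAbs : ℤ) := fun a => Int.abs_eq_natAbs a
  have hva : |v| < q := by rw [habs]; omega
  obtain ⟨hl, hr⟩ := abs_lt.1 hva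
  have e1 : |v - (q:ℤ)| = (q:ℤ) - v := by rw [abs_of_nonpos (by omega)]; ring
  have e2 : |v + (q:ℤ)| = v + q := abs_of_nonneg (by omega)
  rw [e1, e2]
  rcases abs_cases v with ⟨h1, h2⟩ | ⟨h1, h2⟩ <;> rw [h1] <;> split_ifs <;> omega
end

section
/- Let S ⊆ F_q be a Sidon-type set, i.e., all sums a+b with a,b ∈ S and a ≤ b (for some fixed linear order) are pairwise distinct. For any nonnegative function g : F_q → ℝ supported on S with ∑_a g(a)² = 1, we have ∑_{x ∈ F_q} (g ⋆ g)(x)² ≤ 2 − 1/|S|, with equality when g = |S|^{-1/2}·1_S. -/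
open Finset

/-- Real convolution `(g ⋆ h)(x) = ∑_y g(y) h(x−y)` on `F_q`. -/
def convR {F : Type} [Field F] [Fintype F] (g h : F → ℝ) (x : F) : ℝ :=
  ∑ y : F, g y * h (x - y)

lemma convKey {F : Type} [Field F] [Fintype F] [DecidableEq F]
    (S : Finset F)
    (hSidon : ∀ a b c d : F, a ∈ S → b ∈ S → c ∈ S → d ∈ S → a + b = c + d →
      (a = c ∧ b = d) ∨ (a = d ∧ b = c))
    (g : F → ℝ) (hsupp : ∀ a, g a ≠ 0 → a ∈ S) :
    ∑ x : F, convR g g x ^ 2 = 2 * (∑ a : F, g a ^ 2) ^ 2 - ∑ a : F, g a ^ 4 := by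
  have h1 : ∀ x : F, convR g g x ^ 2
      = ∑ a : F, ∑ c : F, g a * g (x - a) * (g c * g (x - c)) := by
    intro x
    rw [convR, sq, Finset.sum_mul_sum]
  have h2 : ∑ x : F, convR g g x ^ 2
      = ∑ a : F, ∑ b : F, ∑ c : F, g a * g b * (g c * g (a + b - c)) := by
    simp_rw [h1]
    rw [Finset.sum_comm]
    refine Finset.sum_congr rfl fun a _ => ?_
    rw [← Equiv.sum_comp (Equiv.addLeft a) (fun x => ∑ c : F, g a * g (x - a) * (g c * g (x - c)))]
    refine Finset.sum_congr rfl fun b _ => ?_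
    refine Finset.sum_congr rfl fun c _ => ?_
    simp [Equiv.addLeft]
  have inner : ∀ a b : F, ∑ c : F, g a * g b * (g c * g (a + b - c))
      = 2 * (g a ^ 2 * g b ^ 2) - (if a = b then g a ^ 4 else 0) := by
    intro a b
    by_cases hab : a = b
    · subst hab
      simp only [if_pos rfl]
      have : ∀ c : F, g a * g a * (g c * g (a + a - c))
          = if c = a then g a ^ 4 else 0 := by
        intro c
        by_cases hc : c = a
        · subst hc; simp; ring
        · simp only [if_neg hc]
          by_cases hga : g a = 0
          · simp [hga]
          by_cases hgc : g c = 0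
          · simp [hgc]
          by_cases hgd : g (a + a - c) = 0
          · simp [hgd]
          exfalso
          rcases hSidon a a c (a + a - c) (hsupp a hga) (hsupp a hga) (hsupp c hgc)
            (hsupp _ hgd) (by ring) with ⟨h, _⟩ | ⟨_, h⟩
          · exact hc h.symm
          · exact hc h.symm
      rw [Finset.sum_congr rfl fun c _ => this c, Finset.sum_ite_eq' Finset.univ a
        (fun _ => g a ^ 4)]
      simp
      ring
    · simp only [if_neg hab]
      have : ∀ c : F, g a * g b * (g c * g (a + b - c))
          = (if c = a then g a ^ 2 * g b ^ 2 else 0)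
            + (if c = b then g a ^ 2 * g b ^ 2 else 0) := by
        intro c
        by_cases hca : c = a
        · subst hca
          rw [if_pos rfl, if_neg hab]
          simp; ring
        by_cases hcb : c = b
        · rw [if_neg hca, if_pos hcb, hcb, add_sub_cancel_right]
          ring
        rw [if_neg hca, if_neg hcb, add_zero]
        by_cases hga : g a = 0
        · simp [hga]
        by_cases hgb : g b = 0
        · simp [hgb]
        by_cases hgc : g c = 0
        · simp [hgc]
        by_cases hgd : g (a + b - c) = 0
        · simp [hgd]
        exfalso
        rcases hSidon a b c (a + b - c) (hsupp a hga) (hsupp b hgb) (hsupp c hgc)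
          (hsupp _ hgd) (by ring) with ⟨h, _⟩ | ⟨_, h⟩
        · exact hca h.symm
        · exact hcb h.symm
      rw [Finset.sum_congr rfl fun c _ => this c, Finset.sum_add_distrib,
        Finset.sum_ite_eq' Finset.univ a, Finset.sum_ite_eq' Finset.univ b]
      simp
      ring
  rw [h2]
  simp_rw [inner]
  rw [Finset.sum_congr rfl (fun a _ => Finset.sum_sub_distrib _ _), Finset.sum_sub_distrib]
  have e1 : ∑ a : F, ∑ b : F, 2 * (g a ^ 2 * g b ^ 2)
      = 2 * (∑ a : F, g a ^ 2) ^ 2 := by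
    rw [sq, Finset.sum_mul_sum, Finset.mul_sum]
    exact Finset.sum_congr rfl fun a _ => by rw [Finset.mul_sum]
  have e2 : ∑ a : F, ∑ b : F, (if a = b then g a ^ 4 else 0) = ∑ a : F, g a ^ 4 := by
    refine Finset.sum_congr rfl fun a _ => ?_
    simp
  rw [e1, e2]

theorem stmt13 {F : Type} [Field F] [Fintype F] [DecidableEq F]
    (S : Finset F) (hS : S.Nonempty)
    (hSidon : ∀ a b c d : F, a ∈ S → b ∈ S → c ∈ S → d ∈ S → a + b = c + d →
      (a = c ∧ b = d) ∨ (a = d ∧ b = c))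
    (g : F → ℝ) (hg0 : ∀ a, 0 ≤ g a) (hsupp : ∀ a, g a ≠ 0 → a ∈ S)
    (hnorm : ∑ a : F, g a ^ 2 = 1) :
    (∑ x : F, convR g g x ^ 2 ≤ 2 - 1 / (S.card : ℝ)) ∧
      (∑ x : F,
          convR (fun a => if a ∈ S then 1 / Real.sqrt (S.card : ℝ) else 0)
            (fun a => if a ∈ S then 1 / Real.sqrt (S.card : ℝ) else 0) x ^ 2 =
        2 - 1 / (S.card : ℝ)) := by
  have hcard : (0 : ℝ) < (S.card : ℝ) := by
    exact_mod_cast Finset.card_pos.mpr hS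
  constructor
  · rw [convKey S hSidon g hsupp, hnorm]
    have hsub : ∑ a : F, g a ^ 4 = ∑ a ∈ S, g a ^ 4 := by
      refine (Finset.sum_subset (Finset.subset_univ S) ?_).symm
      intro x _ hx
      have : g x = 0 := by
        by_contra h; exact hx (hsupp x h)
      simp [this]
    have hsub2 : ∑ a ∈ S, g a ^ 2 = 1 := by
      rw [← hnorm]
      refine Finset.sum_subset (Finset.subset_univ S) ?_
      intro x _ hx
      have : g x = 0 := by
        by_contra h; exact hx (hsupp x h)
      simp [this]
    have cs := sq_sum_le_card_mul_sum_sq (s := S) (f := fun a : F => g a ^ 2)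
    rw [hsub2] at cs
    simp_rw [← pow_mul] at cs
    norm_num at cs
    have h4 : 1 / (S.card : ℝ) ≤ ∑ a : F, g a ^ 4 := by
      rw [hsub, div_le_iff₀ hcard, mul_comm]
      exact cs
    linarith
  · set c := (1 : ℝ) / Real.sqrt (S.card : ℝ) with hc
    set h : F → ℝ := fun a => if a ∈ S then c else 0 with hh
    have hsupp' : ∀ a, h a ≠ 0 → a ∈ S := by
      intro a ha
      by_contra hn
      exact ha (by simp [hh, hn])
    have hsq : c ^ 2 = 1 / (S.card : ℝ) := by
      rw [hc, div_pow, one_pow, Real.sq_sqrt hcard.le]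
    have hsum2 : ∑ a : F, h a ^ 2 = 1 := by
      rw [show ∑ a : F, h a ^ 2 = ∑ a ∈ S, h a ^ 2 from
        (Finset.sum_subset (Finset.subset_univ S) (by intro x _ hx; simp [hh, hx])).symm]
      calc ∑ a ∈ S, h a ^ 2 = ∑ _a ∈ S, c ^ 2 :=
            Finset.sum_congr rfl fun a ha => by simp [hh, ha]
        _ = 1 := by rw [Finset.sum_const, nsmul_eq_mul, hsq]; field_simp
    have hsum4 : ∑ a : F, h a ^ 4 = 1 / (S.card : ℝ) := by
      rw [show ∑ a : F, h a ^ 4 = ∑ a ∈ S, h a ^ 4 from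
        (Finset.sum_subset (Finset.subset_univ S) (by intro x _ hx; simp [hh, hx])).symm]
      calc ∑ a ∈ S, h a ^ 4 = ∑ _a ∈ S, c ^ 4 :=
            Finset.sum_congr rfl fun a ha => by simp [hh, ha]
        _ = 1 / (S.card : ℝ) := by
            rw [Finset.sum_const, nsmul_eq_mul, show c ^ 4 = (c ^ 2) ^ 2 from by ring, hsq]
            field_simp
    rw [convKey S hSidon h hsupp', hsum2, hsum4]
    norm_num
end
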